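/- Let N be a (1,1)-tensor field with vanishing Nijenhuis torsion on a manifold M and let Z be a vector field satisfying Lie_Z N = Id. Define Y_j = N^{j+1} Z for integers j ≥ -1 (so Y_{-1} = Z). Then the commutation relations [Y_j, Y_k] = (k - j) Y_{j+k} hold for all j, k ≥ -1, i.e. the fields Y_j form a representation of the pronilpotent part of the Virasoro algebra. -/
import Mathlib


/-- With `N` torsionless and `Lie_Z N = Id`, the fields `Y_j = N^(j+1) Z`
(`j ≥ -1`, so `Y_{-1} = Z`) satisfy the Virasoro commutation relations
`[Y_j, Y_k] = (k - j)·Y_{j+k}`. -/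
theorem stmt3 (X : Type*) [LieRing X] [LieAlgebra ℝ X]
    (N : X →ₗ[ℝ] X) (Z : X)
    (htorsion : ∀ W V : X, ⁅N W, N V⁆ = N ⁅N W, V⁆ + N ⁅W, N V⁆ - N (N ⁅W, V⁆))
    (hZ : ∀ V : X, ⁅Z, N V⁆ - N ⁅Z, V⁆ = V)
    (Y : ℤ → X) (hY : ∀ j : ℤ, -1 ≤ j → Y j = (N ^ (j + 1).toNat) Z) :
    ∀ j k : ℤ, -1 ≤ j → -1 ≤ k → ⁅Y j, Y k⁆ = (k - j) • Y (j + k) := by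
  -- Key lemma: Lie derivative of N along N^a Z is N^a.
  have key : ∀ (a : ℕ) (V : X), ⁅(N ^ a) Z, N V⁆ = N ⁅(N ^ a) Z, V⁆ + (N ^ a) V := by
    intro a
    induction a with
    | zero =>
      intro V
      simp only [pow_zero, Module.End.one_apply]
      rw [eq_add_of_sub_eq (hZ V), add_comm]
    | succ a ih =>
      intro V
      have hp : (N ^ (a + 1)) Z = N ((N ^ a) Z) := by
        rw [pow_succ']; rfl
      rw [hp, htorsion ((N ^ a) Z) V, ih V, map_add]
      rw [← hp]
      have : N ((N ^ a) V) = (N ^ (a + 1)) V := by rw [pow_succ']; rfl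
      rw [this]
      abel
  -- base: ⁅Z, N^a Z⁆ = a • N^(a-1) Z
  have base : ∀ a : ℕ, ⁅Z, (N ^ a) Z⁆ = (a : ℤ) • (N ^ (a - 1)) Z := by
    intro a
    induction a with
    | zero => simp
    | succ a ih =>
      have hp : (N ^ (a + 1)) Z = N ((N ^ a) Z) := by rw [pow_succ']; rfl
      have h0 := key 0 ((N ^ a) Z)
      simp only [pow_zero, Module.End.one_apply] at h0
      rw [hp, h0, ih, map_zsmul]
      cases a with
      | zero => simp
      | succ b =>
        have : N ((N ^ (b + 1 - 1)) Z) = (N ^ (b + 1)) Z := by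
          simp only [Nat.add_sub_cancel]
          rw [pow_succ']; rfl
        rw [this]
        have : (b + 1 + 1 - 1 : ℕ) = b + 1 := rfl
        rw [this]
        rw [show ((b + 1 + 1 : ℕ) : ℤ) = ((b + 1 : ℕ) : ℤ) + 1 by push_cast; ring,
          add_smul, one_smul]
  -- main: ⁅N^a Z, N^b Z⁆ = (b - a) • N^(a+b-1) Z
  have main : ∀ (b a : ℕ),
      ⁅(N ^ a) Z, (N ^ b) Z⁆ = ((b : ℤ) - (a : ℤ)) • (N ^ (a + b - 1)) Z := by
    intro b
    induction b with
    | zero =>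
      intro a
      rw [← lie_skew]
      simp only [pow_zero, Module.End.one_apply, Nat.add_zero]
      rw [base a]
      push_cast
      rw [zero_sub, neg_smul]
    | succ b ih =>
      intro a
      have hp : (N ^ (b + 1)) Z = N ((N ^ b) Z) := by rw [pow_succ']; rfl
      rw [hp, key a ((N ^ b) Z), ih a, map_zsmul]
      rcases Nat.eq_zero_or_pos (a + b) with h | h
      · obtain ⟨ha, hb⟩ := Nat.add_eq_zero.mp h
        subst ha; subst hb
        simp
      · have h1 : a + b - 1 + 1 = a + b := Nat.succ_pred_eq_of_pos h
        have h2 : N ((N ^ (a + b - 1)) Z) = (N ^ (a + b)) Z := by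
          rw [← h1, pow_succ']; rfl
        have h3 : (a + (b + 1) - 1 : ℕ) = a + b := by omega
        rw [h2, h3]
        have h4 : (N ^ a) ((N ^ b) Z) = (N ^ (a + b)) Z := by
          rw [pow_add]; rfl
        rw [h4]
        push_cast
        rw [add_sub_right_comm, add_smul, one_smul]
  -- conclude
  intro j k hj hk
  rw [hY j hj, hY k hk, main ((k + 1).toNat) ((j + 1).toNat)]
  have haj : (((j + 1).toNat : ℤ)) = j + 1 := Int.toNat_of_nonneg (by omega)
  have hak : (((k + 1).toNat : ℤ)) = k + 1 := Int.toNat_of_nonneg (by omega)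
  rcases le_or_gt (-1) (j + k) with hjk | hjk
  · rw [hY (j + k) hjk]
    have hn : ((j + 1).toNat + (k + 1).toNat - 1 : ℕ) = (j + k + 1).toNat := by omega
    rw [hn, hak, haj]
    ring_nf
  · -- j + k < -1 forces j = k = -1
    have hj1 : j = -1 := by omega
    have hk1 : k = -1 := by omega
    subst hj1; subst hk1
    simp
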